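/- K-stage unbiasedness of the modified G-estimating equations (population version of Theorem 1): In the setting of the K-stage expected pseudo-outcome identity — sub-σ-algebras 𝓖₁ ⊆ … ⊆ 𝓖_K ⊆ 𝓕, treatment indicators A_j, integrable ν_j, bounded 𝓖_j-measurable C_j, bounded 𝓖_j-measurable π_j with π_j = E[A_j | 𝓖_j] a.e., integrable Y, V_{K+1} = Y, V_j = ν_j + 𝟙{C_j > 0}·C_j, σ-algebras 𝓜_j ⊇ 𝓖_j with E[V_{j+1} | 𝓜_j] = ν_j + A_j·C_j μ-a.e., and pseudo outcomes Ṽ_{K+1} = Y, Ṽ_j = Ṽ_{j+1} + (𝟙{C_j > 0} − π_j)·C_j — additionally assume for each j: a treatment indicator A_j* that is 𝓖_j-measurable (the prescribed treatment), a sub-σ-algebra 𝓖_j° ⊆ 𝓖_j (the σ-algebra σ(H_j*) of the observed history alone), a bounded 𝓖_j°-measurable p_j with p_j = E[A_j* | 𝓖_j°] μ-a.e. (correct treatment-assignment model), and Condition 2: E[ν_j | 𝓖_j] = E[ν_j | 𝓖_j°] μ-a.e. Then for every j = 1, …, K and all bounded 𝓖_j°-measurable random variables λ_j and θ_j, E[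 λ_j·(A_j* − p_j)·(Ṽ_{j+1} − π_j·C_j + θ_j) ] = 0. -/

import Mathlib

open MeasureTheory

private lemma aux_integrable_of_abs_le {Ω : Type*} {mΩ : MeasurableSpace Ω} {μ : Measure Ω}
    [IsFiniteMeasure μ] {f : Ω → ℝ} (hf : AEStronglyMeasurable f μ) {M : ℝ}
    (h : ∀ ω, |f ω| ≤ M) : Integrable f μ :=
  ⟨hf, HasFiniteIntegral.of_bounded (C := M)
    (Filter.Eventually.of_forall fun ω => by simpa [Real.norm_eq_abs] using h ω)⟩

/-- K-stage unbiasedness of the modified G-estimating equations (the population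
version of Theorem 1 of the paper): at every stage `j`, for all bounded
`σ(H_j*)`-measurable `λ_j` and `θ_j`,
`E[λ_j·(A_j* − p_j)·(Ṽ_{j+1} − π_j·C_j + θ_j)] = 0`. -/
theorem K_stage_modified_G_estimation_unbiased
    {Ω : Type*} {mΩ : MeasurableSpace Ω} (μ : Measure Ω) [IsProbabilityMeasure μ]
    (K : ℕ) (hK : 1 ≤ K)
    (𝓖 : ℕ → MeasurableSpace Ω)
    (h𝓖mono : ∀ j, 1 ≤ j → j < K → 𝓖 j ≤ 𝓖 (j + 1)) (h𝓖le : ∀ j, 1 ≤ j → j ≤ K → 𝓖 j ≤ mΩ)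
    (A : ℕ → Ω → ℝ) (hA : ∀ j, 1 ≤ j → j ≤ K → Measurable (A j))
    (hA01 : ∀ j, 1 ≤ j → j ≤ K → ∀ ω, A j ω = 0 ∨ A j ω = 1)
    (ν : ℕ → Ω → ℝ) (hν : ∀ j, 1 ≤ j → j ≤ K → Integrable (ν j) μ)
    (C : ℕ → Ω → ℝ) (hC : ∀ j, 1 ≤ j → j ≤ K → Measurable[𝓖 j] (C j))
    (hCbdd : ∀ j, 1 ≤ j → j ≤ K → ∃ M, ∀ ω, |C j ω| ≤ M)
    (π : ℕ → Ω → ℝ) (hπ : ∀ j, 1 ≤ j → j ≤ K → Measurable[𝓖 j] (π j))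
    (hπbdd : ∀ j, 1 ≤ j → j ≤ K → ∃ M, ∀ ω, |π j ω| ≤ M)
    (hπver : ∀ j, 1 ≤ j → j ≤ K → π j =ᵐ[μ] μ[A j | 𝓖 j])
    (Y : Ω → ℝ) (hY : Integrable Y μ)
    -- the value functions V_{K+1} = Y and V_j = ν_j + 𝟙{C_j > 0}·C_j
    (V : ℕ → Ω → ℝ) (hVtop : V (K + 1) = Y)
    (hV : ∀ j, 1 ≤ j → j ≤ K →
      V j = fun ω => ν j ω + (if 0 < C j ω then (1 : ℝ) else 0) * C j ω)
    -- Condition 1 together with the stage-j Q-function recursion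
    (h𝓜 : ∀ j, 1 ≤ j → j ≤ K → ∃ 𝓜 : MeasurableSpace Ω, 𝓖 j ≤ 𝓜 ∧ 𝓜 ≤ mΩ ∧
      μ[V (j + 1) | 𝓜] =ᵐ[μ] fun ω => ν j ω + A j ω * C j ω)
    -- the modified pseudo outcomes Ṽ_{K+1} = Y, Ṽ_j = Ṽ_{j+1} + (𝟙{C_j > 0} − π_j)·C_j
    (Vt : ℕ → Ω → ℝ) (hVttop : Vt (K + 1) = Y)
    (hVt : ∀ j, 1 ≤ j → j ≤ K →
      Vt j = fun ω => Vt (j + 1) ω + ((if 0 < C j ω then (1 : ℝ) else 0) - π j ω) * C j ω)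
    -- the prescribed treatments A_j*, 𝓖_j-measurable treatment indicators
    (Astar : ℕ → Ω → ℝ) (hAstar : ∀ j, 1 ≤ j → j ≤ K → Measurable[𝓖 j] (Astar j))
    (hAstar01 : ∀ j, 1 ≤ j → j ≤ K → ∀ ω, Astar j ω = 0 ∨ Astar j ω = 1)
    -- the σ-algebras 𝓖_j° = σ(H_j*) of the observed histories alone
    (𝓖o : ℕ → MeasurableSpace Ω) (h𝓖o : ∀ j, 1 ≤ j → j ≤ K → 𝓖o j ≤ 𝓖 j)
    -- correctly specified treatment-assignment models p_j = P(A_j* = 1 | 𝓖_j°)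
    (p : ℕ → Ω → ℝ) (hp : ∀ j, 1 ≤ j → j ≤ K → Measurable[𝓖o j] (p j))
    (hpbdd : ∀ j, 1 ≤ j → j ≤ K → ∃ M, ∀ ω, |p j ω| ≤ M)
    (hpver : ∀ j, 1 ≤ j → j ≤ K → p j =ᵐ[μ] μ[Astar j | 𝓖o j])
    -- Condition 2: E[ν_j | 𝓖_j] = E[ν_j | 𝓖_j°]
    (hcond2 : ∀ j, 1 ≤ j → j ≤ K → μ[ν j | 𝓖 j] =ᵐ[μ] μ[ν j | 𝓖o j]) :
    ∀ j, 1 ≤ j → j ≤ K → ∀ lam θ : Ω → ℝ,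
      Measurable[𝓖o j] lam → Measurable[𝓖o j] θ →
      (∃ M, ∀ ω, |lam ω| ≤ M) → (∃ M, ∀ ω, |θ ω| ≤ M) →
      ∫ ω, lam ω * (Astar j ω - p j ω) * (Vt (j + 1) ω - π j ω * C j ω + θ ω) ∂μ = 0 := by
  -- measurability w.r.t. the ambient σ-algebra
  have hmo : ∀ l, 1 ≤ l → l ≤ K → 𝓖o l ≤ mΩ :=
    fun l h1 h2 => (h𝓖o l h1 h2).trans (h𝓖le l h1 h2)
  have hCm : ∀ l, 1 ≤ l → l ≤ K → Measurable (C l) :=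
    fun l h1 h2 => (hC l h1 h2).mono (h𝓖le l h1 h2) le_rfl
  have hπm : ∀ l, 1 ≤ l → l ≤ K → Measurable (π l) :=
    fun l h1 h2 => (hπ l h1 h2).mono (h𝓖le l h1 h2) le_rfl
  have hAstarm : ∀ l, 1 ≤ l → l ≤ K → Measurable (Astar l) :=
    fun l h1 h2 => (hAstar l h1 h2).mono (h𝓖le l h1 h2) le_rfl
  -- the optimal-decision indicator is 𝓖 l-measurable
  have hindm : ∀ l, 1 ≤ l → l ≤ K →
      Measurable[𝓖 l] (fun ω => if 0 < C l ω then (1 : ℝ) else 0) := by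
    intro l h1 h2
    exact Measurable.ite (measurableSet_lt measurable_const (hC l h1 h2))
      measurable_const measurable_const
  -- integrability of the basic bounded functions
  have hAint : ∀ l, 1 ≤ l → l ≤ K → Integrable (A l) μ := by
    intro l h1 h2
    refine aux_integrable_of_abs_le (hA l h1 h2).aestronglyMeasurable (M := 1) fun ω => ?_
    rcases hA01 l h1 h2 ω with h | h <;> simp [h]
  have hAstarint : ∀ l, 1 ≤ l → l ≤ K → Integrable (Astar l) μ := by
    intro l h1 h2
    refine aux_integrable_of_abs_le (hAstarm l h1 h2).aestronglyMeasurable (M := 1) fun ω => ?_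
    rcases hAstar01 l h1 h2 ω with h | h <;> simp [h]
  -- integrability of the increments (ind − π)·C and of 𝟙C, π·C
  have hgm : ∀ l, 1 ≤ l → l ≤ K → Measurable[𝓖 l]
      (fun ω => ((if 0 < C l ω then (1 : ℝ) else 0) - π l ω) * C l ω) :=
    fun l h1 h2 => ((hindm l h1 h2).sub (hπ l h1 h2)).mul (hC l h1 h2)
  have hgint : ∀ l, 1 ≤ l → l ≤ K → Integrable
      (fun ω => ((if 0 < C l ω then (1 : ℝ) else 0) - π l ω) * C l ω) μ := by
    intro l h1 h2
    obtain ⟨MC, hMC⟩ := hCbdd l h1 h2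
    obtain ⟨Mπ, hMπ⟩ := hπbdd l h1 h2
    refine aux_integrable_of_abs_le
      (((hgm l h1 h2).mono (h𝓖le l h1 h2) le_rfl).aestronglyMeasurable)
      (M := (1 + Mπ) * MC) fun ω => ?_
    rw [abs_mul]
    have h1' : |(if 0 < C l ω then (1 : ℝ) else 0) - π l ω| ≤ 1 + Mπ := by
      refine (abs_sub _ _).trans (add_le_add ?_ (hMπ ω))
      split <;> simp
    have h0 : (0:ℝ) ≤ |C l ω| := abs_nonneg _
    calc |(if 0 < C l ω then (1 : ℝ) else 0) - π l ω| * |C l ω|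
        ≤ (1 + Mπ) * |C l ω| := mul_le_mul_of_nonneg_right h1' h0
      _ ≤ (1 + Mπ) * MC := by
          refine mul_le_mul_of_nonneg_left (hMC ω) ?_
          have := (abs_nonneg ((if 0 < C l ω then (1:ℝ) else 0) - π l ω)).trans h1'
          linarith
  have hindCm : ∀ l, 1 ≤ l → l ≤ K → Measurable[𝓖 l]
      (fun ω => (if 0 < C l ω then (1 : ℝ) else 0) * C l ω) :=
    fun l h1 h2 => (hindm l h1 h2).mul (hC l h1 h2)
  have hindCint : ∀ l, 1 ≤ l → l ≤ K → Integrable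
      (fun ω => (if 0 < C l ω then (1 : ℝ) else 0) * C l ω) μ := by
    intro l h1 h2
    obtain ⟨MC, hMC⟩ := hCbdd l h1 h2
    refine aux_integrable_of_abs_le
      (((hindCm l h1 h2).mono (h𝓖le l h1 h2) le_rfl).aestronglyMeasurable)
      (M := MC) fun ω => ?_
    rw [abs_mul]
    have : |if 0 < C l ω then (1:ℝ) else 0| ≤ 1 := by split <;> simp
    calc |if 0 < C l ω then (1:ℝ) else 0| * |C l ω| ≤ 1 * |C l ω| :=
          mul_le_mul_of_nonneg_right this (abs_nonneg _)
      _ = |C l ω| := one_mul _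
      _ ≤ MC := hMC ω
  have hπCm : ∀ l, 1 ≤ l → l ≤ K → Measurable[𝓖 l] (fun ω => π l ω * C l ω) :=
    fun l h1 h2 => (hπ l h1 h2).mul (hC l h1 h2)
  have hπCint : ∀ l, 1 ≤ l → l ≤ K → Integrable (fun ω => π l ω * C l ω) μ := by
    intro l h1 h2
    obtain ⟨MC, hMC⟩ := hCbdd l h1 h2
    obtain ⟨Mπ, hMπ⟩ := hπbdd l h1 h2
    refine aux_integrable_of_abs_le
      (((hπCm l h1 h2).mono (h𝓖le l h1 h2) le_rfl).aestronglyMeasurable)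
      (M := Mπ * MC) fun ω => ?_
    rw [abs_mul]
    exact mul_le_mul (hMπ ω) (hMC ω) (abs_nonneg _) ((abs_nonneg _).trans (hMπ ω))
  -- integrability of the value functions
  have hVint : ∀ l, 2 ≤ l → l ≤ K + 1 → Integrable (V l) μ := by
    intro l h1 h2
    rcases eq_or_lt_of_le h2 with h | h
    · rw [h, hVtop]; exact hY
    · have hlK : l ≤ K := by omega
      rw [hV l (by omega) hlK]
      exact (hν l (by omega) hlK).add (hindCint l (by omega) hlK)
  -- integrability of the modified pseudo outcomes, by downward induction
  have hVtint_aux : ∀ d l, 1 ≤ l → l ≤ K + 1 → K + 1 ≤ l + d → Integrable (Vt l) μ := by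
    intro d
    induction d with
    | zero =>
      intro l h1 h2 h3
      have hl : l = K + 1 := by omega
      rw [hl, hVttop]; exact hY
    | succ d ih =>
      intro l h1 h2 h3
      rcases Nat.lt_or_ge l (K + 1) with hlt | hge
      · have hlK : l ≤ K := by omega
        rw [hVt l h1 hlK]
        exact (ih (l + 1) (by omega) (by omega) (by omega)).add (hgint l h1 hlK)
      · have hl : l = K + 1 := by omega
        rw [hl, hVttop]; exact hY
  have hVtint : ∀ l, 1 ≤ l → l ≤ K + 1 → Integrable (Vt l) μ :=
    fun l h1 h2 => hVtint_aux (K + 1) l h1 h2 (by omega)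
  -- Step C: E[V_{l+1} | 𝓖_l] = E[ν_l | 𝓖_l] + π_l C_l
  have stepC : ∀ l, 1 ≤ l → l ≤ K →
      μ[V (l + 1)|𝓖 l] =ᵐ[μ] fun ω => (μ[ν l|𝓖 l]) ω + π l ω * C l ω := by
    intro l h1 h2
    obtain ⟨𝓜, hG𝓜, h𝓜m, h𝓜eq⟩ := h𝓜 l h1 h2
    have hCA_int : Integrable (fun ω => C l ω * A l ω) μ := by
      obtain ⟨MC, hMC⟩ := hCbdd l h1 h2
      refine (hAint l h1 h2).bdd_mul ((hCm l h1 h2).aestronglyMeasurable) (c := MC) (Filter.Eventually.of_forall fun ω => ?_)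
      simpa [Real.norm_eq_abs] using hMC ω
    have e1 : μ[V (l + 1)|𝓖 l] =ᵐ[μ] μ[μ[V (l + 1)|𝓜]|𝓖 l] :=
      (condExp_condExp_of_le hG𝓜 h𝓜m).symm
    have e2 : μ[μ[V (l + 1)|𝓜]|𝓖 l] =ᵐ[μ] μ[(fun ω => ν l ω + C l ω * A l ω)|𝓖 l] :=
      condExp_congr_ae (h𝓜eq.trans (Filter.Eventually.of_forall fun ω => by dsimp only; ring))
    have e3 : μ[(fun ω => ν l ω + C l ω * A l ω)|𝓖 l] =ᵐ[μ]
        μ[ν l|𝓖 l] + μ[(fun ω => C l ω * A l ω)|𝓖 l] :=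
      condExp_add (hν l h1 h2) hCA_int _
    have e4 : μ[(fun ω => C l ω * A l ω)|𝓖 l] =ᵐ[μ] C l * μ[A l|𝓖 l] :=
      condExp_mul_of_stronglyMeasurable_left (hC l h1 h2).stronglyMeasurable hCA_int (hAint l h1 h2)
    refine e1.trans (e2.trans (e3.trans ?_))
    filter_upwards [e4, hπver l h1 h2] with ω h4 hπω
    simp only [Pi.add_apply, Pi.mul_apply] at h4 ⊢
    rw [h4, ← hπω]
    ring
  -- Key identity: E[Ṽ_{l+1} | 𝓖_l] = E[V_{l+1} | 𝓖_l], by downward induction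
  have key_aux : ∀ d l, 1 ≤ l → l ≤ K → K ≤ l + d →
      μ[Vt (l + 1)|𝓖 l] =ᵐ[μ] μ[V (l + 1)|𝓖 l] := by
    intro d
    induction d with
    | zero =>
      intro l h1 h2 h3
      have hl : l = K := by omega
      rw [hl, hVttop, hVtop]
    | succ d ih =>
      intro l h1 h2 h3
      rcases Nat.lt_or_ge l K with hlt | hge
      · have h1' : 1 ≤ l + 1 := by omega
        have h2' : l + 1 ≤ K := hlt
        have hm : 𝓖 (l + 1) ≤ mΩ := h𝓖le (l + 1) h1' h2'
        -- left side expansion at 𝓖 (l+1)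
        have hL : μ[Vt (l + 1)|𝓖 (l + 1)] =ᵐ[μ] fun ω =>
            (μ[ν (l + 1)|𝓖 (l + 1)]) ω + (if 0 < C (l + 1) ω then (1:ℝ) else 0) * C (l + 1) ω := by
          rw [hVt (l + 1) h1' h2']
          have ha : μ[(fun ω => Vt (l + 1 + 1) ω +
              ((if 0 < C (l + 1) ω then (1:ℝ) else 0) - π (l + 1) ω) * C (l + 1) ω)|𝓖 (l + 1)]
              =ᵐ[μ] μ[Vt (l + 1 + 1)|𝓖 (l + 1)] +
                μ[(fun ω => ((if 0 < C (l + 1) ω then (1:ℝ) else 0) - π (l + 1) ω) * C (l + 1) ω)|𝓖 (l + 1)] :=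
            condExp_add (hVtint (l + 1 + 1) (by omega) (by omega)) (hgint (l + 1) h1' h2') _
          have hb : μ[(fun ω => ((if 0 < C (l + 1) ω then (1:ℝ) else 0) - π (l + 1) ω) * C (l + 1) ω)|𝓖 (l + 1)]
              = fun ω => ((if 0 < C (l + 1) ω then (1:ℝ) else 0) - π (l + 1) ω) * C (l + 1) ω :=
            condExp_of_stronglyMeasurable hm (hgm (l + 1) h1' h2').stronglyMeasurable
              (hgint (l + 1) h1' h2')
          have hc : μ[Vt (l + 1 + 1)|𝓖 (l + 1)] =ᵐ[μ] μ[V (l + 1 + 1)|𝓖 (l + 1)] :=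
            ih (l + 1) h1' h2' (by omega)
          have hd : μ[V (l + 1 + 1)|𝓖 (l + 1)] =ᵐ[μ] fun ω =>
              (μ[ν (l + 1)|𝓖 (l + 1)]) ω + π (l + 1) ω * C (l + 1) ω := stepC (l + 1) h1' h2'
          refine ha.trans ?_
          filter_upwards [hc, hd] with ω ec ed
          simp only [Pi.add_apply, hb]
          rw [ec, ed]
          ring
        -- right side expansion at 𝓖 (l+1)
        have hR : μ[V (l + 1)|𝓖 (l + 1)] =ᵐ[μ] fun ω =>
            (μ[ν (l + 1)|𝓖 (l + 1)]) ω + (if 0 < C (l + 1) ω then (1:ℝ) else 0) * C (l + 1) ω := by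
          rw [hV (l + 1) h1' h2']
          have ha : μ[(fun ω => ν (l + 1) ω +
              (if 0 < C (l + 1) ω then (1:ℝ) else 0) * C (l + 1) ω)|𝓖 (l + 1)]
              =ᵐ[μ] μ[ν (l + 1)|𝓖 (l + 1)] +
                μ[(fun ω => (if 0 < C (l + 1) ω then (1:ℝ) else 0) * C (l + 1) ω)|𝓖 (l + 1)] :=
            condExp_add (hν (l + 1) h1' h2') (hindCint (l + 1) h1' h2') _
          have hb : μ[(fun ω => (if 0 < C (l + 1) ω then (1:ℝ) else 0) * C (l + 1) ω)|𝓖 (l + 1)]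
              = fun ω => (if 0 < C (l + 1) ω then (1:ℝ) else 0) * C (l + 1) ω :=
            condExp_of_stronglyMeasurable hm (hindCm (l + 1) h1' h2').stronglyMeasurable
              (hindCint (l + 1) h1' h2')
          refine ha.trans (Filter.Eventually.of_forall fun ω => ?_)
          simp only [Pi.add_apply, hb]
        have E1 : μ[Vt (l + 1)|𝓖 (l + 1)] =ᵐ[μ] μ[V (l + 1)|𝓖 (l + 1)] := hL.trans hR.symm
        calc μ[Vt (l + 1)|𝓖 l]
            =ᵐ[μ] μ[μ[Vt (l + 1)|𝓖 (l + 1)]|𝓖 l] :=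
              (condExp_condExp_of_le (h𝓖mono l h1 hlt) hm).symm
          _ =ᵐ[μ] μ[μ[V (l + 1)|𝓖 (l + 1)]|𝓖 l] := condExp_congr_ae E1
          _ =ᵐ[μ] μ[V (l + 1)|𝓖 l] := condExp_condExp_of_le (h𝓖mono l h1 hlt) hm
      · have hl : l = K := by omega
        rw [hl, hVttop, hVtop]
  -- main computation
  intro j hj1 hjK lam θ hlam hθ hlamb hθb
  obtain ⟨Ml, hMl⟩ := hlamb
  obtain ⟨Mθ, hMθ⟩ := hθb
  obtain ⟨Mp, hMp⟩ := hpbdd j hj1 hjK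
  have hm : 𝓖 j ≤ mΩ := h𝓖le j hj1 hjK
  have hmoj : 𝓖o j ≤ mΩ := hmo j hj1 hjK
  have hlamm : Measurable lam := hlam.mono hmoj le_rfl
  have hθm : Measurable θ := hθ.mono hmoj le_rfl
  have hpm : Measurable (p j) := (hp j hj1 hjK).mono hmoj le_rfl
  have hpint : Integrable (p j) μ :=
    aux_integrable_of_abs_le hpm.aestronglyMeasurable hMp
  -- F = lam·(A* − p), bounded 𝓖_j-measurable
  set F : Ω → ℝ := fun ω => lam ω * (Astar j ω - p j ω) with hF
  have hFsm : StronglyMeasurable[𝓖 j] F :=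
    ((hlam.mono (h𝓖o j hj1 hjK) le_rfl).mul
      ((hAstar j hj1 hjK).sub ((hp j hj1 hjK).mono (h𝓖o j hj1 hjK) le_rfl))).stronglyMeasurable
  have hFbdd : ∀ ω, |F ω| ≤ Ml * (1 + Mp) := by
    intro ω
    rw [hF]
    simp only
    rw [abs_mul]
    have hA1 : |Astar j ω - p j ω| ≤ 1 + Mp := by
      refine (abs_sub _ _).trans (add_le_add ?_ (hMp ω))
      rcases hAstar01 j hj1 hjK ω with h | h <;> simp [h]
    exact mul_le_mul (hMl ω) hA1 (abs_nonneg _) ((abs_nonneg _).trans (hMl ω))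
  -- G = Ṽ_{j+1} − π C + θ, integrable
  set G : Ω → ℝ := fun ω => Vt (j + 1) ω - π j ω * C j ω + θ ω with hG
  have hθint : Integrable θ μ := aux_integrable_of_abs_le hθm.aestronglyMeasurable hMθ
  have hGint : Integrable G μ :=
    ((hVtint (j + 1) (by omega) (by omega)).sub (hπCint j hj1 hjK)).add hθint
  have hFGint : Integrable (fun ω => F ω * G ω) μ := by
    refine hGint.bdd_mul ((hFsm.mono hm).aestronglyMeasurable) (c := Ml * (1 + Mp)) (Filter.Eventually.of_forall fun ω => ?_)
    simpa [Real.norm_eq_abs] using hFbdd ω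
  -- conditional expectation of G given 𝓖_j
  have hGce : μ[G|𝓖 j] =ᵐ[μ] fun ω => (μ[ν j|𝓖o j]) ω + θ ω := by
    have ha : μ[G|𝓖 j] =ᵐ[μ]
        (μ[Vt (j + 1)|𝓖 j] - μ[(fun ω => π j ω * C j ω)|𝓖 j]) + μ[θ|𝓖 j] := by
      rw [hG]
      exact condExp_add ((hVtint (j + 1) (by omega) (by omega)).sub (hπCint j hj1 hjK)) hθint _
        |>.trans (Filter.EventuallyEq.add
          (condExp_sub (hVtint (j + 1) (by omega) (by omega)) (hπCint j hj1 hjK) _)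
          (Filter.EventuallyEq.rfl))
    have hbθ : μ[θ|𝓖 j] = θ :=
      condExp_of_stronglyMeasurable hm
        ((hθ.mono (h𝓖o j hj1 hjK) le_rfl)).stronglyMeasurable hθint
    have hbπC : μ[(fun ω => π j ω * C j ω)|𝓖 j] = fun ω => π j ω * C j ω :=
      condExp_of_stronglyMeasurable hm (hπCm j hj1 hjK).stronglyMeasurable (hπCint j hj1 hjK)
    have hkey : μ[Vt (j + 1)|𝓖 j] =ᵐ[μ] μ[V (j + 1)|𝓖 j] := key_aux K j hj1 hjK (by omega)
    have hsC := stepC j hj1 hjK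
    have hc2 := hcond2 j hj1 hjK
    refine ha.trans ?_
    filter_upwards [hkey, hsC, hc2] with ω e1 e2 e3
    simp only [Pi.add_apply, Pi.sub_apply, hbθ, hbπC]
    rw [e1, e2, ← e3]
    ring
  -- first conditioning on 𝓖_j
  have step1 : ∫ ω, F ω * G ω ∂μ = ∫ ω, F ω * ((μ[ν j|𝓖o j]) ω + θ ω) ∂μ := by
    rw [← integral_condExp (f := fun ω => F ω * G ω) hm]
    have h2 : μ[(fun ω => F ω * G ω)|𝓖 j] =ᵐ[μ] F * μ[G|𝓖 j] :=
      condExp_mul_of_stronglyMeasurable_left hFsm hFGint hGint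
    refine integral_congr_ae (h2.trans ?_)
    filter_upwards [hGce] with ω e
    simp only [Pi.mul_apply]
    rw [e]
  -- second conditioning on 𝓖o_j
  set Θ : Ω → ℝ := fun ω => (μ[ν j|𝓖o j]) ω + θ ω with hΘ
  have hΘint : Integrable Θ μ := integrable_condExp.add hθint
  have hf2sm : StronglyMeasurable[𝓖o j] (fun ω => lam ω * Θ ω) :=
    (hlam.stronglyMeasurable).mul (stronglyMeasurable_condExp.add hθ.stronglyMeasurable)
  have hg2int : Integrable (fun ω => Astar j ω - p j ω) μ :=
    (hAstarint j hj1 hjK).sub hpint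
  have hf2g2int : Integrable (fun ω => (lam ω * Θ ω) * (Astar j ω - p j ω)) μ := by
    have h1 : Integrable (fun ω => F ω * Θ ω) μ := by
      refine hΘint.bdd_mul ((hFsm.mono hm).aestronglyMeasurable) (c := Ml * (1 + Mp)) (Filter.Eventually.of_forall fun ω => ?_)
      simpa [Real.norm_eq_abs] using hFbdd ω
    refine h1.congr (Filter.Eventually.of_forall fun ω => ?_)
    rw [hF]
    simp only
    ring
  have hg2ce : μ[(fun ω => Astar j ω - p j ω)|𝓖o j] =ᵐ[μ] 0 := by
    have ha : μ[(fun ω => Astar j ω - p j ω)|𝓖o j] =ᵐ[μ]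
        μ[Astar j|𝓖o j] - μ[p j|𝓖o j] :=
      condExp_sub (hAstarint j hj1 hjK) hpint _
    have hb : μ[p j|𝓖o j] = p j :=
      condExp_of_stronglyMeasurable hmoj (hp j hj1 hjK).stronglyMeasurable hpint
    refine ha.trans ?_
    filter_upwards [hpver j hj1 hjK] with ω e
    simp only [Pi.sub_apply, Pi.zero_apply, hb]
    rw [← e]
    ring
  have step2 : ∫ ω, (lam ω * Θ ω) * (Astar j ω - p j ω) ∂μ = 0 := by
    rw [← integral_condExp (f := fun ω => (lam ω * Θ ω) * (Astar j ω - p j ω)) hmoj]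
    have h2 : μ[(fun ω => (lam ω * Θ ω) * (Astar j ω - p j ω))|𝓖o j] =ᵐ[μ]
        (fun ω => lam ω * Θ ω) * μ[(fun ω => Astar j ω - p j ω)|𝓖o j] :=
      condExp_mul_of_stronglyMeasurable_left hf2sm hf2g2int hg2int
    refine integral_eq_zero_of_ae (h2.trans ?_)
    filter_upwards [hg2ce] with ω e
    simp only [Pi.mul_apply, Pi.zero_apply]
    rw [e]
    simp
  calc ∫ ω, lam ω * (Astar j ω - p j ω) * (Vt (j + 1) ω - π j ω * C j ω + θ ω) ∂μ
      = ∫ ω, F ω * G ω ∂μ := rfl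
    _ = ∫ ω, F ω * Θ ω ∂μ := step1
    _ = ∫ ω, (lam ω * Θ ω) * (Astar j ω - p j ω) ∂μ :=
        integral_congr_ae (Filter.Eventually.of_forall fun ω => by rw [hF]; simp only; ring)
    _ = 0 := step2
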